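/- For all a > 0 and λ > 0, setting x := 2√(aλ), one has ∫₀^∞ λ e^{−λt} e^{−a/t} dt ≤ √(π/x) (x + 1/2) e^{−x}. -/

import Mathlib

open MeasureTheory Real

namespace ELIBAux
open Set

lemma gauss_shift_Ioi (b r : ℝ) :
    ∫ t in Ioi r, Real.exp (-b * (t - r) ^ 2) = Real.sqrt (Real.pi / b) / 2 := by
  rw [← integral_gaussian_Ioi b]
  have hmp : MeasurePreserving (fun x : ℝ => x + r) volume volume :=
    measurePreserving_add_right volume r
  have hemb : MeasurableEmbedding (fun x : ℝ => x + r) :=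
    (MeasurableEquiv.addRight r).measurableEmbedding
  have h := hmp.setIntegral_preimage_emb hemb
      (fun t => Real.exp (-b * (t - r) ^ 2)) (Ioi r)
  have hpre : (fun x : ℝ => x + r) ⁻¹' Ioi r = Ioi 0 := by
    ext x; simp
  rw [hpre] at h
  rw [← h]
  simp

lemma gauss_shift_Iic (b r : ℝ) :
    ∫ t in Iic r, Real.exp (-b * (t - r) ^ 2) = Real.sqrt (Real.pi / b) / 2 := by
  have h := integral_comp_neg_Iic r (fun y => Real.exp (-b * (y + r) ^ 2))
  calc ∫ t in Iic r, Real.exp (-b * (t - r) ^ 2)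
      = ∫ t in Iic r, Real.exp (-b * (-t + r) ^ 2) := by
        refine setIntegral_congr_fun measurableSet_Iic fun t _ => ?_
        congr 1; ring
    _ = ∫ x in Ioi (-r), Real.exp (-b * (x + r) ^ 2) := h
    _ = ∫ x in Ioi (-r), Real.exp (-b * (x - (-r)) ^ 2) := by simp [sub_neg_eq_add]
    _ = Real.sqrt (Real.pi / b) / 2 := gauss_shift_Ioi b (-r)

lemma exp_tail {l : ℝ} (hl : 0 < l) (c : ℝ) :
    ∫ t in Ioi c, Real.exp (-(l * t)) = Real.exp (-(l * c)) / l := by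
  have h := integral_comp_mul_left_Ioi (fun x => Real.exp (-x)) c hl
  simp only [smul_eq_mul, integral_exp_neg_Ioi] at h
  rw [h]; ring

lemma final_arith {s : ℝ} (hs : 0 < s) :
    Real.sqrt Real.pi * Real.sqrt s / 2
      + (Real.sqrt 3 * (Real.sqrt Real.pi * Real.sqrt s) / 2 + Real.exp (-s))
      ≤ Real.sqrt (Real.pi / (2 * s)) * (2 * s + 1 / 2) := by
  set P := Real.sqrt Real.pi with hP
  set S := Real.sqrt s with hS
  set Q2 := Real.sqrt 2 with hQ2
  set Q3 := Real.sqrt 3 with hQ3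
  set E := Real.exp (-s) with hE
  have hP2 : P ^ 2 = Real.pi := Real.sq_sqrt Real.pi_pos.le
  have hS2 : S ^ 2 = s := Real.sq_sqrt hs.le
  have hQ22 : Q2 ^ 2 = 2 := Real.sq_sqrt (by norm_num)
  have hQ32 : Q3 ^ 2 = 3 := Real.sq_sqrt (by norm_num)
  have hPpos : 0 < P := Real.sqrt_pos.mpr Real.pi_pos
  have hSpos : 0 < S := Real.sqrt_pos.mpr hs
  have hQ2pos : 0 < Q2 := Real.sqrt_pos.mpr (by norm_num)
  have hQ3pos : 0 < Q3 := Real.sqrt_pos.mpr (by norm_num)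
  have hEpos : 0 < E := Real.exp_pos _
  have hR : Real.sqrt (Real.pi / (2 * s)) = P / (Q2 * S) := by
    rw [hP, hQ2, hS, Real.sqrt_div Real.pi_pos.le, Real.sqrt_mul (by norm_num)]
  -- key exponential bound : 2*Q2*S*E ≤ P
  have h1 : 2 * s * Real.exp (-(2 * s)) ≤ Real.pi / 4 := by
    have ha := Real.add_one_le_exp (2 * s - 1)
    have he1 : Real.exp (2 * s - 1) = Real.exp (2 * s) * Real.exp (-1) := by
      rw [← Real.exp_add]; ring_nf
    have he2 : Real.exp (-1 : ℝ) ≤ 1 / 2 := by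
      rw [Real.exp_neg]
      have h2e : (2 : ℝ) ≤ Real.exp 1 := by
        have := Real.add_one_le_exp (1 : ℝ); linarith
      rw [inv_le_comm₀ (Real.exp_pos 1) (by norm_num)] at *
      · linarith
    have hpi : (1 : ℝ) / 2 ≤ Real.pi / 4 := by linarith [Real.pi_gt_three]
    have hexp2 : Real.exp (2 * s - 1) * Real.exp (-(2 * s)) = Real.exp (-1 : ℝ) := by
      rw [← Real.exp_add]; ring_nf
    have hstep : 2 * s * Real.exp (-(2 * s)) ≤ Real.exp (2 * s - 1) * Real.exp (-(2 * s)) :=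
      mul_le_mul_of_nonneg_right (by linarith) (Real.exp_nonneg _)
    calc 2 * s * Real.exp (-(2 * s)) ≤ Real.exp (2 * s - 1) * Real.exp (-(2 * s)) := hstep
      _ = Real.exp (-1 : ℝ) := hexp2
      _ ≤ 1 / 2 := he2
      _ ≤ Real.pi / 4 := hpi
  have hE2 : E ^ 2 = Real.exp (-(2 * s)) := by
    rw [hE, sq, ← Real.exp_add]; ring_nf
  have hsq : (2 * Q2 * S * E) ^ 2 ≤ P ^ 2 := by
    have : (2 * Q2 * S * E) ^ 2 = 4 * Q2 ^ 2 * S ^ 2 * E ^ 2 := by ring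
    rw [this, hQ22, hS2, hE2, hP2]; linarith
  have hkey : 2 * Q2 * S * E ≤ P := by
    calc 2 * Q2 * S * E = Real.sqrt ((2 * Q2 * S * E) ^ 2) :=
          (Real.sqrt_sq (by positivity)).symm
      _ ≤ Real.sqrt (P ^ 2) := Real.sqrt_le_sqrt hsq
      _ = P := Real.sqrt_sq hPpos.le
  -- coefficient bound
  have hQ : 1 + Q3 ≤ 2 * Q2 := by
    nlinarith [sq_nonneg (2 * Q2 - 1 - Q3), sq_nonneg (Q2 - Q3), hQ2pos.le, hQ3pos.le]
  rw [hR, div_mul_eq_mul_div, le_div_iff₀ (by positivity)]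
  have h4 : Q2 * (1 + Q3) ≤ 4 := by nlinarith [hQ2pos.le]
  have h5 : Q2 * (1 + Q3) * (P * S ^ 2) ≤ 4 * (P * S ^ 2) :=
    mul_le_mul_of_nonneg_right h4 (by positivity)
  have h6 : E * (Q2 * S) ≤ P / 2 := by nlinarith [hkey]
  rw [← hS2]
  nlinarith [h5, h6]

end ELIBAux

open ELIBAux Set in
/-- for all `a > 0` and `l > 0`, with `x := 2√(a·l)`,
`∫₀^∞ l e^{−l t} e^{−a/t} dt ≤ √(π/x) (x + 1/2) e^{−x}`. -/
theorem exponential_laplace_integral_bound (a l : ℝ) (ha : 0 < a) (hl : 0 < l) :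
    ∫ t in Set.Ioi (0 : ℝ), l * Real.exp (-l * t) * Real.exp (-a / t)
      ≤ Real.sqrt (Real.pi / (2 * Real.sqrt (a * l)))
          * (2 * Real.sqrt (a * l) + 1 / 2)
          * Real.exp (-(2 * Real.sqrt (a * l))) := by
  have hs : 0 < Real.sqrt (a * l) := Real.sqrt_pos.mpr (mul_pos ha hl)
  set s := Real.sqrt (a * l) with hs_def
  set t0 := Real.sqrt (a / l) with ht0_def
  have ht0 : 0 < t0 := Real.sqrt_pos.mpr (div_pos ha hl)
  have ht0sq : t0 ^ 2 = a / l := Real.sq_sqrt (div_pos ha hl).le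
  have ha2 : a = l * t0 ^ 2 := by rw [ht0sq]; field_simp
  have hlt0 : l * t0 = s := by
    have h1 : (l * t0) ^ 2 = s ^ 2 := by
      rw [mul_pow, ht0sq, hs_def, Real.sq_sqrt (mul_pos ha hl).le]; field_simp
    have h2 : 0 ≤ l * t0 := by positivity
    nlinarith [hs]
  set f : ℝ → ℝ := fun t => l * Real.exp (-l * t) * Real.exp (-a / t) with hf_def
  -- integrability of f on Ioi 0
  have hfm : AEStronglyMeasurable f (volume.restrict (Ioi 0)) := by
    apply ContinuousOn.aestronglyMeasurable ?_ measurableSet_Ioi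
    apply ContinuousOn.mul
    · exact (continuous_const.mul (Real.continuous_exp.comp
        (continuous_const.mul continuous_id))).continuousOn
    · exact Real.continuous_exp.comp_continuousOn
        (continuousOn_const.div continuousOn_id fun t ht => ne_of_gt ht)
  have hfbound : ∀ t ∈ Ioi (0:ℝ), f t ≤ l * Real.exp (-(l * t)) := by
    intro t ht
    have ht' : 0 < t := ht
    have h1 : Real.exp (-a / t) ≤ 1 := by
      rw [Real.exp_le_one_iff]
      exact div_nonpos_of_nonpos_of_nonneg (by linarith) ht'.le
    have : l * Real.exp (-l * t) * Real.exp (-a / t) ≤ l * Real.exp (-l * t) * 1 := by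
      apply mul_le_mul_of_nonneg_left h1 (by positivity)
    simpa [hf_def, neg_mul] using this
  have hfnonneg : ∀ t, 0 ≤ f t := fun t => by positivity
  have hgint : IntegrableOn (fun t => l * Real.exp (-(l * t))) (Ioi (0:ℝ)) := by
    have := (exp_neg_integrableOn_Ioi (0:ℝ) hl).const_mul l
    simpa [hf_def, neg_mul, IntegrableOn] using this
  have hfi : IntegrableOn f (Ioi 0) := by
    apply Integrable.mono hgint hfm
    filter_upwards [ae_restrict_mem measurableSet_Ioi] with t ht
    rw [Real.norm_eq_abs, Real.norm_eq_abs, abs_of_nonneg (hfnonneg t),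
      abs_of_nonneg (by positivity)]
    exact hfbound t ht
  -- split the integral
  have e1 : Ioc t0 (3 * t0) ∪ Ioi (3 * t0) = Ioi t0 := Ioc_union_Ioi_eq_Ioi (by linarith)
  have e2 : Ioc 0 t0 ∪ Ioi t0 = Ioi (0:ℝ) := Ioc_union_Ioi_eq_Ioi ht0.le
  have hfi1 : IntegrableOn f (Ioc 0 t0) := hfi.mono_set (fun x hx => hx.1)
  have hfiI : IntegrableOn f (Ioi t0) := hfi.mono_set (Ioi_subset_Ioi ht0.le)
  have hfi2 : IntegrableOn f (Ioc t0 (3 * t0)) := hfiI.mono_set (fun x hx => hx.1)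
  have hfi3 : IntegrableOn f (Ioi (3 * t0)) := hfiI.mono_set (Ioi_subset_Ioi (by linarith))
  have hsplit : ∫ t in Ioi (0:ℝ), f t
      = (∫ t in Ioc 0 t0, f t) + ((∫ t in Ioc t0 (3*t0), f t) + (∫ t in Ioi (3*t0), f t)) := by
    rw [← e2, setIntegral_union (Ioc_disjoint_Ioi le_rfl) measurableSet_Ioi hfi1 hfiI]
    congr 1
    rw [← e1, setIntegral_union (Ioc_disjoint_Ioi le_rfl) measurableSet_Ioi hfi2 hfi3]
  -- piece A : (0, t0]
  have hb1 : 0 < l / t0 := div_pos hl ht0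
  have hb2 : 0 < l / (3 * t0) := div_pos hl (by linarith)
  have hg1int : Integrable (fun t : ℝ => Real.exp (-(l / t0) * (t - t0) ^ 2)) :=
    (integrable_exp_neg_mul_sq hb1).comp_sub_right t0
  have hg2int : Integrable (fun t : ℝ => Real.exp (-(l / (3 * t0)) * (t - t0) ^ 2)) :=
    (integrable_exp_neg_mul_sq hb2).comp_sub_right t0
  have hpwA : ∀ t ∈ Ioc (0:ℝ) t0,
      f t ≤ (l * Real.exp (-(2 * s))) * Real.exp (-(l / t0) * (t - t0) ^ 2) := by
    rintro t ⟨ht1, ht2⟩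
    have harg : 2 * s + (l / t0) * (t - t0) ^ 2 ≤ l * t + a / t := by
      rw [← sub_nonneg]
      have hexpand : l * t + a / t - (2 * s + (l / t0) * (t - t0) ^ 2)
          = (t0 - t) * (t - t0) ^ 2 * l / (t * t0) := by
        rw [ha2, ← hlt0]; field_simp; ring
      rw [hexpand]
      apply div_nonneg ?_ (by positivity)
      have ht0t : 0 ≤ t0 - t := by linarith
      positivity
    calc f t = l * Real.exp (-(l * t + a / t)) := by
          rw [hf_def]; simp only []; rw [mul_assoc, ← Real.exp_add]; congr 1; ring
      _ ≤ l * Real.exp (-(2 * s + (l / t0) * (t - t0) ^ 2)) := by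
          apply mul_le_mul_of_nonneg_left (Real.exp_le_exp.mpr (by linarith)) hl.le
      _ = (l * Real.exp (-(2 * s))) * Real.exp (-(l / t0) * (t - t0) ^ 2) := by
          rw [mul_assoc, ← Real.exp_add]; congr 2; ring
  have hpwB : ∀ t ∈ Ioc t0 (3 * t0),
      f t ≤ (l * Real.exp (-(2 * s))) * Real.exp (-(l / (3 * t0)) * (t - t0) ^ 2) := by
    rintro t ⟨ht1, ht2⟩
    have htpos : 0 < t := lt_trans ht0 ht1
    have harg : 2 * s + (l / (3 * t0)) * (t - t0) ^ 2 ≤ l * t + a / t := by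
      rw [← sub_nonneg]
      have hexpand : l * t + a / t - (2 * s + (l / (3 * t0)) * (t - t0) ^ 2)
          = (3 * t0 - t) * (t - t0) ^ 2 * l / (3 * (t * t0)) := by
        rw [ha2, ← hlt0]; field_simp; ring
      rw [hexpand]
      apply div_nonneg ?_ (by positivity)
      have ht0t : 0 ≤ 3 * t0 - t := by linarith
      positivity
    calc f t = l * Real.exp (-(l * t + a / t)) := by
          rw [hf_def]; simp only []; rw [mul_assoc, ← Real.exp_add]; congr 1; ring
      _ ≤ l * Real.exp (-(2 * s + (l / (3 * t0)) * (t - t0) ^ 2)) := by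
          apply mul_le_mul_of_nonneg_left (Real.exp_le_exp.mpr (by linarith)) hl.le
      _ = (l * Real.exp (-(2 * s))) * Real.exp (-(l / (3 * t0)) * (t - t0) ^ 2) := by
          rw [mul_assoc, ← Real.exp_add]; congr 2; ring
  -- constants
  have hc1 : l * Real.sqrt (Real.pi / (l / t0)) = Real.sqrt Real.pi * Real.sqrt s := by
    have hq : Real.pi / (l / t0) = (Real.pi * s) / l ^ 2 := by
      rw [← hlt0]; field_simp
    rw [hq, Real.sqrt_div (by positivity), Real.sqrt_sq hl.le, Real.sqrt_mul Real.pi_pos.le]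
    field_simp
  have hc2 : l * Real.sqrt (Real.pi / (l / (3 * t0)))
      = Real.sqrt 3 * (Real.sqrt Real.pi * Real.sqrt s) := by
    have hq : Real.pi / (l / (3 * t0)) = (3 * (Real.pi * s)) / l ^ 2 := by
      rw [← hlt0]; field_simp
    rw [hq, Real.sqrt_div (by positivity), Real.sqrt_sq hl.le,
      Real.sqrt_mul (by norm_num : (0:ℝ) ≤ 3), Real.sqrt_mul Real.pi_pos.le]
    field_simp
  -- bound piece A
  have hA : ∫ t in Ioc 0 t0, f t
      ≤ Real.exp (-(2 * s)) * (Real.sqrt Real.pi * Real.sqrt s / 2) := by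
    calc ∫ t in Ioc 0 t0, f t
        ≤ ∫ t in Ioc 0 t0,
            (l * Real.exp (-(2 * s))) * Real.exp (-(l / t0) * (t - t0) ^ 2) :=
          setIntegral_mono_on hfi1 ((hg1int.const_mul _).integrableOn) measurableSet_Ioc hpwA
      _ ≤ ∫ t in Iic t0,
            (l * Real.exp (-(2 * s))) * Real.exp (-(l / t0) * (t - t0) ^ 2) := by
          apply setIntegral_mono_set ((hg1int.const_mul _).integrableOn)
            (Filter.Eventually.of_forall fun t => by positivity)
            (HasSubset.Subset.eventuallyLE Ioc_subset_Iic_self)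
      _ = (l * Real.exp (-(2 * s))) * (Real.sqrt (Real.pi / (l / t0)) / 2) := by
          rw [integral_const_mul, gauss_shift_Iic]
      _ = Real.exp (-(2 * s)) * (Real.sqrt Real.pi * Real.sqrt s / 2) := by
          rw [← hc1]; ring
  -- bound piece B
  have hB : ∫ t in Ioc t0 (3 * t0), f t
      ≤ Real.exp (-(2 * s)) * (Real.sqrt 3 * (Real.sqrt Real.pi * Real.sqrt s) / 2) := by
    calc ∫ t in Ioc t0 (3 * t0), f t
        ≤ ∫ t in Ioc t0 (3 * t0),
            (l * Real.exp (-(2 * s))) * Real.exp (-(l / (3 * t0)) * (t - t0) ^ 2) :=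
          setIntegral_mono_on hfi2 ((hg2int.const_mul _).integrableOn) measurableSet_Ioc hpwB
      _ ≤ ∫ t in Ioi t0,
            (l * Real.exp (-(2 * s))) * Real.exp (-(l / (3 * t0)) * (t - t0) ^ 2) := by
          apply setIntegral_mono_set ((hg2int.const_mul _).integrableOn)
            (Filter.Eventually.of_forall fun t => by positivity)
            (HasSubset.Subset.eventuallyLE (fun x hx => hx.1))
      _ = (l * Real.exp (-(2 * s))) * (Real.sqrt (Real.pi / (l / (3 * t0))) / 2) := by
          rw [integral_const_mul, gauss_shift_Ioi]
      _ = Real.exp (-(2 * s)) * (Real.sqrt 3 * (Real.sqrt Real.pi * Real.sqrt s) / 2) := by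
          rw [← hc2]; ring
  -- bound piece C
  have hC : ∫ t in Ioi (3 * t0), f t ≤ Real.exp (-(3 * s)) := by
    calc ∫ t in Ioi (3 * t0), f t
        ≤ ∫ t in Ioi (3 * t0), l * Real.exp (-(l * t)) := by
          apply setIntegral_mono_on hfi3
            (hgint.mono_set (Ioi_subset_Ioi (by linarith))) measurableSet_Ioi
          intro t ht
          exact hfbound t (lt_trans (by positivity : (0:ℝ) < 3 * t0) ht)
      _ = l * (Real.exp (-(l * (3 * t0))) / l) := by
          rw [integral_const_mul, exp_tail hl]
      _ = Real.exp (-(3 * s)) := by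
          rw [mul_div_cancel₀ _ hl.ne']
          congr 1
          rw [← hlt0]; ring
  -- assemble
  have hexp3 : Real.exp (-(3 * s)) = Real.exp (-(2 * s)) * Real.exp (-s) := by
    rw [← Real.exp_add]; ring_nf
  calc ∫ t in Ioi (0:ℝ), f t
      = (∫ t in Ioc 0 t0, f t) + ((∫ t in Ioc t0 (3*t0), f t) + (∫ t in Ioi (3*t0), f t)) :=
        hsplit
    _ ≤ Real.exp (-(2 * s)) * (Real.sqrt Real.pi * Real.sqrt s / 2)
        + (Real.exp (-(2 * s)) * (Real.sqrt 3 * (Real.sqrt Real.pi * Real.sqrt s) / 2)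
          + Real.exp (-(3 * s))) := by
        gcongr
    _ = Real.exp (-(2 * s)) * (Real.sqrt Real.pi * Real.sqrt s / 2
          + (Real.sqrt 3 * (Real.sqrt Real.pi * Real.sqrt s) / 2 + Real.exp (-s))) := by
        rw [hexp3]; ring
    _ ≤ Real.exp (-(2 * s)) * (Real.sqrt (Real.pi / (2 * s)) * (2 * s + 1 / 2)) :=
        mul_le_mul_of_nonneg_left (final_arith hs) (Real.exp_nonneg _)
    _ = Real.sqrt (Real.pi / (2 * s)) * (2 * s + 1 / 2) * Real.exp (-(2 * s)) := by ring
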